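/- arXiv:1501.07478 — 2 statements merged into one kernel-verified Lean document; each statement's English description precedes it below -/
import Mathlib

section
/- If π_m(k,n) denotes the number of overpartitions counted by G(-A'_N;k,n) with largest part at most m and overlined, and φ_m(k,n) the number with largest part at most m and non-overlined, then π_m(k-1, n) = φ_m(k, n) for all m, k ≥ 1, n. -/
open Finset

/-- An overpartition is encoded as a list of pairs `(part, overlined?)`: parts are positive,
values are non-increasing, and an overlined part must be the first occurrence of its value. -/
def IsOverpartition (l : List (ℕ × Bool)) : Prop :=
  (∀ p ∈ l, 0 < p.1) ∧
  l.Chain' (fun p s => s.1 ≤ p.1 ∧ (s.2 = true → s.1 < p.1))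

/-- The sum of the parts of an overpartition. -/
def opSum (l : List (ℕ × Bool)) : ℕ := (l.map Prod.fst).sum

/-- The number of non-overlined parts of an overpartition. -/
def opFree (l : List (ℕ × Bool)) : ℕ := (l.filter (fun p => p.2 = false)).length

/-- `betaN N m` is the least positive residue of `m` modulo `N`. -/
def betaN (N : ℕ) (m : ℤ) : ℤ := if m % N = 0 then (N : ℤ) else m % N

/-- The subset of `{a(1),…,a(r)}` (given by its index set) whose sum is `x`, when `x` is one of
the `2^r - 1` subset sums `α`; junk value `∅` otherwise. -/
noncomputable def subsetOf (r : ℕ) (a : Fin r → ℕ) (x : ℤ) : Finset (Fin r) :=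
  if h : ∃ S : Finset (Fin r), S.Nonempty ∧ (∑ i ∈ S, (a i : ℤ)) = x then h.choose else ∅

/-- `wOf r a α` is the number of summands in the defining sum of `α`. -/
noncomputable def wOf (r : ℕ) (a : Fin r → ℕ) (x : ℤ) : ℕ := (subsetOf r a x).card

/-- `vOf r a α` is the smallest `a(i)` appearing in the defining sum of `α`. -/
noncomputable def vOf (r : ℕ) (a : Fin r → ℕ) (x : ℤ) : ℕ :=
  WithTop.untopD 0 ((subsetOf r a x).image a).min

/-- `x` belongs to `-A_N`: `x ≡ -a(i) (mod N)` for some `i`. -/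
def InNegA (r N : ℕ) (a : Fin r → ℕ) (x : ℕ) : Prop :=
  ∃ i : Fin r, ((x : ℤ) + a i) % N = 0

/-- `x` belongs to `-A'_N`: `x ≡ -α(i) (mod N)` for some subset sum `α(i)`. -/
def InNegA' (r N : ℕ) (a : Fin r → ℕ) (x : ℕ) : Prop :=
  ∃ S : Finset (Fin r), S.Nonempty ∧ ((x : ℤ) + ∑ i ∈ S, (a i : ℤ)) % N = 0

/-- `l` is an overpartition into parts from `-A_N` (counted by `F(-A_N; k, n)`). -/
def IsF (r N : ℕ) (a : Fin r → ℕ) (l : List (ℕ × Bool)) : Prop :=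
  IsOverpartition l ∧ ∀ p ∈ l, InNegA r N a p.1

/-- `l` is an overpartition into parts from `-A'_N` satisfying the difference conditions
`λ_i - λ_{i+1} ≥ N·w(β_N(λ_{i+1}) - 1 + χ(λ_{i+1} overlined)) + v(β_N(λ_{i+1})) - β_N(λ_{i+1})`
and `λ_s ≥ N(w(β_N(-λ_s)) - 1)` (counted by `G(-A'_N; k, n)`). -/
noncomputable def IsG (r N : ℕ) (a : Fin r → ℕ) (l : List (ℕ × Bool)) : Prop :=
  IsOverpartition l ∧ (∀ p ∈ l, InNegA' r N a p.1) ∧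
  l.Chain' (fun p s =>
    (N : ℤ) * wOf r a (betaN N s.1 - 1 + (if s.2 then 1 else 0))
      + vOf r a (betaN N s.1) - betaN N s.1 ≤ (p.1 : ℤ) - s.1) ∧
  (∀ h : l ≠ [], (N : ℤ) * ((wOf r a (betaN N (-((l.getLast h).1 : ℤ))) : ℤ) - 1)
      ≤ ((l.getLast h).1 : ℤ))

/-- Toggle the overline status of the first part. -/
def tog : List (ℕ × Bool) → List (ℕ × Bool)
  | [] => []
  | (p, b) :: t => (p, !b) :: t

lemma tog_tog : ∀ l, tog (tog l) = l
  | [] => rfl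
  | (p, b) :: t => by simp [tog]

lemma tog_ne_nil {l : List (ℕ × Bool)} (h : l ≠ []) : tog l ≠ [] := by
  cases l with
  | nil => exact absurd rfl h
  | cons p t => cases p; simp [tog]

lemma opSum_tog (l : List (ℕ × Bool)) : opSum (tog l) = opSum l := by
  cases l with
  | nil => rfl
  | cons p t => cases p; simp [tog, opSum]

lemma getLast_fst_tog (l : List (ℕ × Bool)) (h : l ≠ []) :
    ((tog l).getLast (tog_ne_nil h)).1 = (l.getLast h).1 := by
  cases l with
  | nil => exact absurd rfl h
  | cons p t =>
    cases p with
    | mk x b =>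
      cases t with
      | nil => rfl
      | cons q s =>
        show ((q :: s).getLast (by simp)).1 = ((q :: s).getLast (by simp)).1
        rfl

lemma isG_tog (r N : ℕ) (a : Fin r → ℕ) (l : List (ℕ × Bool)) (h : IsG r N a l) :
    IsG r N a (tog l) := by
  cases l with
  | nil => exact h
  | cons p t =>
    cases p with
    | mk x b =>
      obtain ⟨⟨hpos, hchain⟩, hmem, hdiff, hlast⟩ := h
      refine ⟨⟨?_, ?_⟩, ?_, ?_, ?_⟩
      · intro q hq
        rcases List.mem_cons.1 hq with hq | hq
        · subst hq; exact hpos (x, b) List.mem_cons_self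
        · exact hpos q (List.mem_cons_of_mem _ hq)
      · rw [show tog ((x, b) :: t) = (x, !b) :: t from rfl, List.Chain', List.isChain_cons]
        rw [List.Chain', List.isChain_cons] at hchain
        exact hchain
      · intro q hq
        rcases List.mem_cons.1 hq with hq | hq
        · subst hq; exact hmem (x, b) List.mem_cons_self
        · exact hmem q (List.mem_cons_of_mem _ hq)
      · rw [show tog ((x, b) :: t) = (x, !b) :: t from rfl, List.Chain', List.isChain_cons]
        rw [List.Chain', List.isChain_cons] at hdiff
        exact hdiff
      · intro h'
        have := hlast (by simp)
        rwa [getLast_fst_tog ((x, b) :: t) (by simp)]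

lemma head_fst_tog (l : List (ℕ × Bool)) (h : l ≠ []) :
    ((tog l).head (tog_ne_nil h)).1 = (l.head h).1 := by
  cases l with
  | nil => exact absurd rfl h
  | cons p t => cases p; rfl

lemma head_snd_tog (l : List (ℕ × Bool)) (h : l ≠ []) :
    ((tog l).head (tog_ne_nil h)).2 = !(l.head h).2 := by
  cases l with
  | nil => exact absurd rfl h
  | cons p t => cases p; rfl

lemma opFree_tog (l : List (ℕ × Bool)) (h : l ≠ []) :
    opFree (tog l) = if (l.head h).2 then opFree l + 1 else opFree l - 1 := by
  cases l with
  | nil => exact absurd rfl h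
  | cons p t =>
    cases p with
    | mk x b => cases b <;> simp [tog, opFree, List.filter]

/-- If `π_m(k,n)` counts the overpartitions counted by `G(-A'_N;k,n)` with largest part at most
`m` and overlined, and `φ_m(k,n)` those with largest part at most `m` and non-overlined, then
`π_m(k-1, n) = φ_m(k, n)` for all `m`, `k ≥ 1`, `n`: the bijection overlines or un-overlines
the largest part. -/
theorem pi_eq_phi
    (r N : ℕ) (a : Fin r → ℕ)
    (hpos : ∀ i, 0 < a i) (hmono : StrictMono a)
    (hgrow : ∀ k : Fin r, ∑ i ∈ Finset.univ.filter (· < k), a i < a k)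
    (hdistinct : ∀ S T : Finset (Fin r), S.Nonempty → T.Nonempty →
      (∑ i ∈ S, a i) = ∑ i ∈ T, a i → S = T)
    (hN : (∑ i, a i) ≤ N)
    (m : ℕ) (k : ℕ) (hk : 1 ≤ k) (n : ℕ) :
    Nat.card {l : List (ℕ × Bool) // IsG r N a l ∧ opFree l = k - 1 ∧ opSum l = n ∧
        ∃ h : l ≠ [], (l.head h).2 = true ∧ (l.head h).1 ≤ m}
      = Nat.card {l : List (ℕ × Bool) // IsG r N a l ∧ opFree l = k ∧ opSum l = n ∧
          ∃ h : l ≠ [], (l.head h).2 = false ∧ (l.head h).1 ≤ m} := by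
  have F : ∀ l : List (ℕ × Bool), (IsG r N a l ∧ opFree l = k - 1 ∧ opSum l = n ∧
        ∃ h : l ≠ [], (l.head h).2 = true ∧ (l.head h).1 ≤ m) →
      (IsG r N a (tog l) ∧ opFree (tog l) = k ∧ opSum (tog l) = n ∧
        ∃ h : tog l ≠ [], ((tog l).head h).2 = false ∧ ((tog l).head h).1 ≤ m) := by
    rintro l ⟨hG, hF, hS, hne, hb, hm⟩
    refine ⟨isG_tog _ _ _ _ hG, ?_, by rw [opSum_tog]; exact hS, tog_ne_nil hne, ?_, ?_⟩
    · rw [opFree_tog l hne, hb]; simp; omega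
    · rw [head_snd_tog l hne, hb]; rfl
    · rw [head_fst_tog l hne]; exact hm
  have G : ∀ l : List (ℕ × Bool), (IsG r N a l ∧ opFree l = k ∧ opSum l = n ∧
        ∃ h : l ≠ [], (l.head h).2 = false ∧ (l.head h).1 ≤ m) →
      (IsG r N a (tog l) ∧ opFree (tog l) = k - 1 ∧ opSum (tog l) = n ∧
        ∃ h : tog l ≠ [], ((tog l).head h).2 = true ∧ ((tog l).head h).1 ≤ m) := by
    rintro l ⟨hG, hF, hS, hne, hb, hm⟩
    refine ⟨isG_tog _ _ _ _ hG, ?_, by rw [opSum_tog]; exact hS, tog_ne_nil hne, ?_, ?_⟩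
    · rw [opFree_tog l hne, hb]; simp; omega
    · rw [head_snd_tog l hne, hb]; rfl
    · rw [head_fst_tog l hne]; exact hm
  exact Nat.card_congr ⟨fun x => ⟨tog x.1, F x.1 x.2⟩, fun x => ⟨tog x.1, G x.1 x.2⟩,
    fun x => Subtype.ext (tog_tog _), fun x => Subtype.ext (tog_tog _)⟩
end

section
/- (Appell's Comparison Theorem.) If (β_m) is a sequence of complex numbers such that β_m converges to a limit L as m → ∞, then lim_{x → 1^-} (1-x) ∑_{m=0}^{∞} β_m x^m = L. -/
open Filter

set_option maxHeartbeats 1000000 in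
/-- Appell's Comparison Theorem: if `β_m → L` as `m → ∞`, then
`lim_{x → 1⁻} (1 - x) ∑_{m=0}^{∞} β_m x^m = L`, the limit being taken as the real number `x`
tends to `1` from below. -/
theorem appell_comparison (β : ℕ → ℂ) (L : ℂ) (h : Tendsto β atTop (nhds L)) :
    Tendsto (fun x : ℝ => ((1 : ℂ) - x) * ∑' m : ℕ, β m * (x : ℂ) ^ m)
      (nhdsWithin 1 (Set.Iio 1)) (nhds L) := by
  -- difference sequence
  set f : ℕ → ℂ := fun n => if n = 0 then β 0 else β n - β (n - 1) with hf
  -- partial sums of f tend to L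
  have hps : Tendsto (fun n => ∑ i ∈ Finset.range n, f i) atTop (nhds L) := by
    rw [← tendsto_add_atTop_iff_nat 1]
    have : (fun n => ∑ i ∈ Finset.range (n + 1), f i) = β := by
      funext n
      induction n with
      | zero => simp [hf]
      | succ k ih => rw [Finset.sum_range_succ, ih]; simp [hf]
    rw [this]; exact h
  have key := Complex.tendsto_tsum_powerSeries_nhdsWithin_lt hps
  rw [tendsto_map'_iff] at key
  -- β is bounded
  obtain ⟨C, hC⟩ := h.norm.bddAbove_range.imp (fun C hC n => hC (Set.mem_range_self n))
  refine key.congr' ?_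
  filter_upwards [Ioo_mem_nhdsLT_of_mem (Set.mem_Ioc.mpr ⟨(by norm_num : (0:ℝ) < 1), le_refl (1:ℝ)⟩)]
    with x hx
  obtain ⟨hx0, hx1⟩ := hx
  have hxn : ‖(x : ℂ)‖ < 1 := by
    rw [Complex.norm_real, Real.norm_eq_abs, abs_lt]
    constructor <;> linarith
  have hsum : Summable (fun m => β m * (x : ℂ) ^ m) := by
    apply Summable.of_norm
    apply Summable.of_nonneg_of_le (fun n => norm_nonneg _)
      (fun n => ?_) ((summable_geometric_of_lt_one (by positivity) hxn).mul_left C)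
    rw [norm_mul, norm_pow]
    exact mul_le_mul_of_nonneg_right (hC n) (by positivity)
  have hsum1 : Summable (fun n => β (n + 1) * (x : ℂ) ^ (n + 1)) :=
    (summable_nat_add_iff 1).mpr hsum
  have hsum2 : Summable (fun n => β n * (x : ℂ) ^ (n + 1)) := by
    have := hsum.mul_left (x : ℂ)
    apply this.congr
    intro n; ring
  -- the identity
  simp only [Function.comp_apply]
  have h1 : ∑' n, f n * (x : ℂ) ^ n
      = β 0 + ∑' n, f (n + 1) * (x : ℂ) ^ (n + 1) := by
    rw [Summable.tsum_eq_zero_add]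
    · simp [hf]
    · rw [← summable_nat_add_iff 1]
      apply Summable.congr (hsum1.sub hsum2)
      intro n
      simp only [hf, if_neg (Nat.succ_ne_zero n), Nat.add_sub_cancel]
      ring
  have h2 : ∑' n, f (n + 1) * (x : ℂ) ^ (n + 1)
      = (∑' n, β (n + 1) * (x : ℂ) ^ (n + 1)) - ∑' n, β n * (x : ℂ) ^ (n + 1) := by
    rw [← Summable.tsum_sub hsum1 hsum2]
    congr 1; funext n
    simp only [hf, if_neg (Nat.succ_ne_zero n), Nat.add_sub_cancel]
    ring
  have h3 : ∑' n, β (n + 1) * (x : ℂ) ^ (n + 1)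
      = (∑' m, β m * (x : ℂ) ^ m) - β 0 := by
    rw [Summable.tsum_eq_zero_add hsum]; simp
  have h4 : ∑' n, β n * (x : ℂ) ^ (n + 1) = (x : ℂ) * ∑' m, β m * (x : ℂ) ^ m := by
    rw [← hsum.tsum_mul_left]
    congr 1; funext n; ring
  rw [h1, h2, h3, h4]
  ring
end
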